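/- Let Γ be a connected finite simplicial graph that is not a join, and let H be an infinite proper malnormal subgroup of the right-angled Coxeter group G_Γ. Then H is join-free, i.e., no infinite-order element of H is conjugate in G_Γ to an element of a join subgroup. -/

import Mathlib

open scoped Pointwise ENNReal

namespace RACGPaper

/-- The defining relations of the right-angled Coxeter group of a simple graph. -/
def racgRels {V : Type*} (Γ : SimpleGraph V) : Set (FreeGroup V) :=
  {r | (∃ v : V, r = FreeGroup.of v * FreeGroup.of v) ∨
       (∃ v w : V, Γ.Adj v w ∧ r = (FreeGroup.of v * FreeGroup.of w) ^ 2)}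

/-- The right-angled Coxeter group of a simple graph. -/
def RACG {V : Type*} (Γ : SimpleGraph V) : Type _ := PresentedGroup (racgRels Γ)

instance {V : Type*} (Γ : SimpleGraph V) : Group (RACG Γ) :=
  inferInstanceAs (Group (PresentedGroup (racgRels Γ)))

/-- The generator of `RACG Γ` corresponding to a vertex. -/
def gen {V : Type*} (Γ : SimpleGraph V) (v : V) : RACG Γ := PresentedGroup.of v

/-- Word length with respect to the vertex generators (which are involutions). -/
noncomputable def len {V : Type*} (Γ : SimpleGraph V) (g : RACG Γ) : ℕ :=
  sInf {n | ∃ l : List V, l.length = n ∧ (l.map (gen Γ)).prod = g}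

/-- The word metric on `RACG Γ`. -/
noncomputable def wdist {V : Type*} (Γ : SimpleGraph V) (g h : RACG Γ) : ℕ :=
  len Γ (g⁻¹ * h)

/-- Distance from a point to a subgroup. -/
noncomputable def distH {V : Type*} (Γ : SimpleGraph V) (H : Subgroup (RACG Γ))
    (x : RACG Γ) : ℕ :=
  sInf {n | ∃ h ∈ H, wdist Γ x h = n}

/-- A `(K, C)`-quasi-geodesic defined on the integer interval `[a, b]`. -/
def IsQuasiGeodesic {V : Type*} (Γ : SimpleGraph V) (K C : ℝ) (a b : ℤ)
    (γ : ℤ → RACG Γ) : Prop :=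
  ∀ i ∈ Set.Icc a b, ∀ j ∈ Set.Icc a b,
    |(i : ℝ) - (j : ℝ)| / K - C ≤ (wdist Γ (γ i) (γ j) : ℝ) ∧
    (wdist Γ (γ i) (γ j) : ℝ) ≤ K * |(i : ℝ) - (j : ℝ)| + C

/-- A subgroup is strongly quasiconvex if every quasi-geodesic with endpoints on it
stays uniformly close to it. -/
def StronglyQuasiconvex {V : Type*} (Γ : SimpleGraph V) (H : Subgroup (RACG Γ)) : Prop :=
  ∀ K C : ℝ, 1 ≤ K → 0 ≤ C → ∃ M : ℝ, 0 ≤ M ∧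
    ∀ (a b : ℤ) (γ : ℤ → RACG Γ), IsQuasiGeodesic Γ K C a b γ →
      γ a ∈ H → γ b ∈ H → ∀ i ∈ Set.Icc a b, (distH Γ H (γ i) : ℝ) ≤ M

/-- `H` is malnormal: `gHg⁻¹ ∩ H = {1}` for every `g ∉ H`. -/
def Malnormal {G : Type*} [Group G] (H : Subgroup G) : Prop :=
  ∀ g : G, g ∉ H → ∀ x : G, x ∈ H → g⁻¹ * x * g ∈ H → x = 1

/-- `H` is almost malnormal: `gHg⁻¹ ∩ H` is finite for every `g ∉ H`. -/
def AlmostMalnormal {G : Type*} [Group G] (H : Subgroup G) : Prop :=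
  ∀ g : G, g ∉ H → {x : G | x ∈ H ∧ g⁻¹ * x * g ∈ H}.Finite

/-- An almost malnormal collection of subgroups. -/
def AlmostMalnormalColl {G : Type*} [Group G] (𝓗 : Set (Subgroup G)) : Prop :=
  ∀ H ∈ 𝓗, ∀ H' ∈ 𝓗, ∀ g : G,
    {x : G | x ∈ H ∧ g⁻¹ * x * g ∈ (H' : Subgroup G)}.Infinite → H = H' ∧ g ∈ H

/-- A group is virtually free if it has a free subgroup of finite index. -/
def VirtuallyFree (G : Type*) [Group G] : Prop :=
  ∃ F : Subgroup G, F.FiniteIndex ∧ IsFreeGroup F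

/-- A set of vertices spans a join subgraph. -/
def IsJoin {V : Type*} (Γ : SimpleGraph V) (J : Set V) : Prop :=
  ∃ V₁ V₂ : Set V, V₁.Nonempty ∧ V₂.Nonempty ∧ Disjoint V₁ V₂ ∧ V₁ ∪ V₂ = J ∧
    ∀ v ∈ V₁, ∀ w ∈ V₂, Γ.Adj v w

/-- The special subgroup generated by a set of vertices. -/
def special {V : Type*} (Γ : SimpleGraph V) (S₁ : Set V) : Subgroup (RACG Γ) :=
  Subgroup.closure (gen Γ '' S₁)

/-- The conjugate subgroup `gHg⁻¹`. -/
def conjSubgroup {G : Type*} [Group G] (g : G) (H : Subgroup G) : Subgroup G :=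
  H.map (MulAut.conj g).toMonoidHom

/-- `x` lies in some join subgroup of `RACG Γ`. -/
def InJoinSubgroup {V : Type*} (Γ : SimpleGraph V) (x : RACG Γ) : Prop :=
  ∃ J : Set V, IsJoin Γ J ∧ x ∈ special Γ J

/-- An infinite subgroup is join-free if none of its infinite-order elements is
conjugate into a join subgroup. -/
def JoinFree {V : Type*} (Γ : SimpleGraph V) (H : Subgroup (RACG Γ)) : Prop :=
  (H : Set (RACG Γ)).Infinite ∧
    ∀ h ∈ H, ¬ IsOfFinOrder h → ∀ g : RACG Γ, ¬ InJoinSubgroup Γ (g * h * g⁻¹)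

/-- The star of a vertex: the vertex together with its neighbours. -/
def starSet {V : Type*} (Γ : SimpleGraph V) (v : V) : Set V :=
  {v} ∪ {w | Γ.Adj v w}

/-- `x` lies in some star subgroup of `RACG Γ`. -/
def InStarSubgroup {V : Type*} (Γ : SimpleGraph V) (x : RACG Γ) : Prop :=
  ∃ v : V, x ∈ special Γ (starSet Γ v)

/-- An infinite subgroup is star-free if none of its infinite-order elements is
conjugate into a star subgroup. -/
def StarFree {V : Type*} (Γ : SimpleGraph V) (H : Subgroup (RACG Γ)) : Prop :=
  (H : Set (RACG Γ)).Infinite ∧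
    ∀ h ∈ H, ¬ IsOfFinOrder h → ∀ g : RACG Γ, ¬ InStarSubgroup Γ (g * h * g⁻¹)

/-- Word length with respect to a (symmetrized) set `T` of group elements. -/
noncomputable def wlen {G : Type*} [Group G] (T : Set G) (g : G) : ℕ :=
  sInf {n | ∃ l : List G, (∀ x ∈ l, x ∈ T ∨ x⁻¹ ∈ T) ∧ l.length = n ∧ l.prod = g}

/-- A finitely generated subgroup of `RACG Γ` is undistorted if the inclusion is a
quasi-isometric embedding with respect to word metrics. -/
def Undistorted {V : Type*} (Γ : SimpleGraph V) (H : Subgroup (RACG Γ)) : Prop :=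
  ∃ T : Finset (RACG Γ), (T : Set (RACG Γ)) ⊆ (H : Set (RACG Γ)) ∧
    Subgroup.closure (T : Set (RACG Γ)) = H ∧
    ∃ K C : ℝ, 1 ≤ K ∧ 0 ≤ C ∧ ∀ h ∈ H,
      (wlen (T : Set (RACG Γ)) h : ℝ) / K - C ≤ (len Γ h : ℝ) ∧
      (len Γ h : ℝ) ≤ K * (wlen (T : Set (RACG Γ)) h : ℝ) + C

/-- A subgroup is stable if it is undistorted and quasi-geodesics with common
endpoints on it uniformly fellow-travel. -/
def Stable {V : Type*} (Γ : SimpleGraph V) (H : Subgroup (RACG Γ)) : Prop :=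
  Undistorted Γ H ∧ ∀ K C : ℝ, 1 ≤ K → 0 ≤ C → ∃ M : ℝ, 0 ≤ M ∧
    ∀ (a b a' b' : ℤ) (γ γ' : ℤ → RACG Γ),
      IsQuasiGeodesic Γ K C a b γ → IsQuasiGeodesic Γ K C a' b' γ' →
      γ a = γ' a' → γ b = γ' b' → γ a ∈ H → γ b ∈ H →
      (∀ i ∈ Set.Icc a b, ∃ j ∈ Set.Icc a' b', (wdist Γ (γ i) (γ' j) : ℝ) ≤ M) ∧
      (∀ j ∈ Set.Icc a' b', ∃ i ∈ Set.Icc a b, (wdist Γ (γ i) (γ' j) : ℝ) ≤ M)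

/-- `H` is `N`-join-busting: every join subword of a reduced word representing an
element of `H` has length at most `N`. -/
def JoinBusting {V : Type*} (Γ : SimpleGraph V) (H : Subgroup (RACG Γ)) (N : ℕ) : Prop :=
  ∀ h ∈ H, ∀ w : List V, (w.map (gen Γ)).prod = h → w.length = len Γ h →
    ∀ β : List V, β <:+: w → InJoinSubgroup Γ (β.map (gen Γ)).prod → β.length ≤ N

/-- `a b c d` is an induced four-cycle (in this cyclic order), with diagonals
`(a, c)` and `(b, d)`. -/
def IsInducedFourCycle {V : Type*} (Γ : SimpleGraph V) (a b c d : V) : Prop :=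
  a ≠ c ∧ b ≠ d ∧ ¬ Γ.Adj a c ∧ ¬ Γ.Adj b d ∧
    Γ.Adj a b ∧ Γ.Adj b c ∧ Γ.Adj c d ∧ Γ.Adj d a

/-- A set of vertices is the vertex set of an induced four-cycle. -/
def IsFourCycleSet {V : Type*} (Γ : SimpleGraph V) (Q : Set V) : Prop :=
  ∃ a b c d : V, Q = {a, b, c, d} ∧ IsInducedFourCycle Γ a b c d

/-- The four-cycle graph `Γ⁴`: vertices are induced four-cycles of `Γ`, adjacent
when they share a pair of non-adjacent vertices. -/
def fourCycleGraph {V : Type*} (Γ : SimpleGraph V) :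
    SimpleGraph {Q : Set V // IsFourCycleSet Γ Q} :=
  SimpleGraph.fromRel (fun Q Q' => ∃ u v : V, u ≠ v ∧ ¬ Γ.Adj u v ∧
    u ∈ (Q : Set V) ∩ (Q' : Set V) ∧ v ∈ (Q : Set V) ∩ (Q' : Set V))

/-- A connected component of `Γ⁴` whose support is the whole vertex set of `Γ`. -/
def FullSupportComponent {V : Type*} (Γ : SimpleGraph V)
    (C : (fourCycleGraph Γ).ConnectedComponent) : Prop :=
  ∀ v : V, ∃ Q : {Q : Set V // IsFourCycleSet Γ Q},
    (fourCycleGraph Γ).connectedComponentMk Q = C ∧ v ∈ (Q : Set V)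

/-- `Γ` is CFS: some component of `Γ⁴` has full support. -/
def CFS {V : Type*} (Γ : SimpleGraph V) : Prop :=
  ∃ C : (fourCycleGraph Γ).ConnectedComponent, FullSupportComponent Γ C

/-- Length (number of edges) of a shortest edge path from `x` to `y` in the Cayley
graph all of whose vertices are at distance at least `c` from `H`. -/
noncomputable def avoidDist {V : Type*} (Γ : SimpleGraph V) (H : Subgroup (RACG Γ))
    (c : ℝ) (x y : RACG Γ) : ℝ≥0∞ :=
  ⨅ (l : List (RACG Γ)) (_ : l.head? = some x) (_ : l.getLast? = some y)
    (_ : l.Chain' fun a b => wdist Γ a b = 1)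
    (_ : ∀ z ∈ l, c ≤ (distH Γ H z : ℝ)), ((l.length - 1 : ℕ) : ℝ≥0∞)

/-- The subgroup divergence functions `σⁿ_ρ` of `H` in `RACG Γ`. -/
noncomputable def divFun {V : Type*} (Γ : SimpleGraph V) (H : Subgroup (RACG Γ))
    (ρ : ℝ) (n : ℕ) (r : ℝ) : ℝ≥0∞ :=
  ⨅ (x : RACG Γ) (y : RACG Γ) (_ : (distH Γ H x : ℝ) = r)
    (_ : (distH Γ H y : ℝ) = r) (_ : avoidDist Γ H r x y ≠ ⊤)
    (_ : (n : ℝ) * r ≤ (wdist Γ x y : ℝ)), avoidDist Γ H (ρ * r) x y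

/-- Domination of functions: `f(x) ≤ A g(Bx) + Cx` for large `x`. -/
def FunDom (f g : ℝ → ℝ≥0∞) : Prop :=
  ∃ A B C D : ℝ, 0 < A ∧ 0 < B ∧ 0 < C ∧ 0 < D ∧
    ∀ x : ℝ, D < x → f x ≤ ENNReal.ofReal A * g (B * x) + ENNReal.ofReal (C * x)

/-- Domination of families of divergence functions. -/
def FamDom (δ δ' : ℝ → ℕ → ℝ → ℝ≥0∞) : Prop :=
  ∃ L : ℝ, L ∈ Set.Ioc (0 : ℝ) 1 ∧ ∃ M : ℕ, 0 < M ∧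
    ∀ ρ ∈ Set.Ioc (0 : ℝ) 1, ∀ n : ℕ, 2 ≤ n → FunDom (δ (L * ρ) n) (δ' ρ (M * n))

/-- A family of divergence functions is equivalent to a single function. -/
def FamEquivFun (δ : ℝ → ℕ → ℝ → ℝ≥0∞) (f : ℝ → ℝ≥0∞) : Prop :=
  FamDom δ (fun _ _ => f) ∧ FamDom (fun _ _ => f) δ

/-- Height at most `n`: any `n+1` pairwise distinct cosets give conjugates with
finite total intersection. -/
def HeightAtMost {G : Type*} [Group G] (H : Subgroup G) (n : ℕ) : Prop :=
  ∀ f : Fin (n + 1) → G, (∀ i j, i ≠ j → (f i)⁻¹ * f j ∉ H) →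
    {x : G | ∀ i, (f i)⁻¹ * x * f i ∈ H}.Finite

/-- `H` has finite height in `G`. -/
def FiniteHeight {G : Type*} [Group G] (H : Subgroup G) : Prop :=
  ∃ n : ℕ, HeightAtMost H n

end RACGPaper


section Aux

open RACGPaper

variable {V : Type*} {Γ : SimpleGraph V}

lemma racg_rel_one {r : FreeGroup V} (hr : r ∈ racgRels Γ) :
    (PresentedGroup.mk (racgRels Γ) r : RACG Γ) = 1 :=
  (QuotientGroup.eq_one_iff _).mpr (Subgroup.subset_normalClosure hr)

lemma gen_mul_self (v : V) : gen Γ v * gen Γ v = 1 := by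
  have hr : FreeGroup.of v * FreeGroup.of v ∈ racgRels Γ := Or.inl ⟨v, rfl⟩
  have := racg_rel_one (Γ := Γ) hr
  rwa [map_mul] at this

lemma gen_inv (v : V) : (gen Γ v)⁻¹ = gen Γ v :=
  inv_eq_of_mul_eq_one_right (gen_mul_self v)

lemma gen_comm {v w : V} (h : Γ.Adj v w) : Commute (gen Γ v) (gen Γ w) := by
  have hr : (FreeGroup.of v * FreeGroup.of w) ^ 2 ∈ racgRels Γ := Or.inr ⟨v, w, h, rfl⟩
  have h2 : (gen Γ v * gen Γ w) ^ 2 = 1 := by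
    have := racg_rel_one (Γ := Γ) hr
    rwa [map_pow, map_mul] at this
  have h3 : (gen Γ v * gen Γ w)⁻¹ = gen Γ v * gen Γ w :=
    inv_eq_of_mul_eq_one_right (by rw [← sq]; exact h2)
  show gen Γ v * gen Γ w = gen Γ w * gen Γ v
  calc gen Γ v * gen Γ w = (gen Γ v * gen Γ w)⁻¹ := h3.symm
    _ = (gen Γ w)⁻¹ * (gen Γ v)⁻¹ := by rw [mul_inv_rev]
    _ = gen Γ w * gen Γ v := by rw [gen_inv, gen_inv]

lemma gen_ne_one (v : V) : gen Γ v ≠ 1 := by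
  have hrel : ∀ r ∈ racgRels Γ, FreeGroup.lift (fun _ : V => (-1 : ℤˣ)) r = 1 := by
    rintro r (⟨w, rfl⟩ | ⟨w, u, _, rfl⟩) <;> simp
  intro h
  have := congrArg (PresentedGroup.toGroup hrel) h
  replace this : PresentedGroup.toGroup hrel (gen Γ v) = 1 := this.trans (map_one _)
  have h2 : (-1 : ℤˣ) = 1 := by
    rw [← PresentedGroup.toGroup.of hrel (x := v)]; exact this
  exact (by decide : (-1 : ℤˣ) ≠ 1) h2

lemma special_commute {V₁ V₂ : Set V} (hadj : ∀ v ∈ V₁, ∀ w ∈ V₂, Γ.Adj v w) :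
    ∀ a ∈ special Γ V₁, ∀ b ∈ special Γ V₂, Commute a b := by
  intro a ha
  induction ha using Subgroup.closure_induction with
  | mem x hx =>
    obtain ⟨v, hv, rfl⟩ := hx
    intro b hb
    induction hb using Subgroup.closure_induction with
    | mem y hy =>
      obtain ⟨w, hw, rfl⟩ := hy
      exact gen_comm (hadj v hv w hw)
    | one => exact Commute.one_right _
    | mul y z _ _ h1 h2 => exact h1.mul_right h2
    | inv y _ h => exact h.inv_right
  | one => exact fun b _ => Commute.one_left b
  | mul x y _ _ h1 h2 => exact fun b hb => (h1 b hb).mul_left (h2 b hb)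
  | inv x _ h => exact fun b hb => (h b hb).inv_left

lemma special_decomp {V₁ V₂ : Set V} (hadj : ∀ v ∈ V₁, ∀ w ∈ V₂, Γ.Adj v w)
    {x : RACG Γ} (hx : x ∈ special Γ (V₁ ∪ V₂)) :
    ∃ a ∈ special Γ V₁, ∃ b ∈ special Γ V₂, x = a * b := by
  have himg : gen Γ '' (V₁ ∪ V₂) = gen Γ '' V₁ ∪ gen Γ '' V₂ := Set.image_union _ _ _
  rw [special, himg] at hx
  induction hx using Subgroup.closure_induction with
  | mem y hy =>
    rcases hy with hy | hy
    · exact ⟨y, Subgroup.subset_closure hy, 1, one_mem _, (mul_one y).symm⟩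
    · exact ⟨1, one_mem _, y, Subgroup.subset_closure hy, (one_mul y).symm⟩
  | one => exact ⟨1, one_mem _, 1, one_mem _, (one_mul 1).symm⟩
  | mul y z _ _ h1 h2 =>
    obtain ⟨a, ha, b, hb, rfl⟩ := h1
    obtain ⟨a', ha', b', hb', rfl⟩ := h2
    refine ⟨a * a', mul_mem ha ha', b * b', mul_mem hb hb', ?_⟩
    have hc : Commute a' b := (special_commute hadj a' ha' b hb)
    calc a * b * (a' * b') = a * (b * a') * b' := by group
      _ = a * (a' * b) * b' := by rw [hc.symm.eq]
      _ = a * a' * (b * b') := by group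
  | inv y _ h =>
    obtain ⟨a, ha, b, hb, rfl⟩ := h
    refine ⟨a⁻¹, inv_mem ha, b⁻¹, inv_mem hb, ?_⟩
    have hc : Commute a b := special_commute hadj a ha b hb
    rw [mul_inv_rev, hc.inv_inv.eq]

end Aux

open RACGPaper in
/-- an infinite proper malnormal subgroup of a RACG with connected
non-join defining graph is join-free. -/
theorem malnormal_joinFree
    {V : Type*} [Fintype V] (Γ : SimpleGraph V) (hconn : Γ.Connected)
    (hnj : ¬ IsJoin Γ (Set.univ : Set V)) (H : Subgroup (RACG Γ))
    (hinf : (H : Set (RACG Γ)).Infinite) (hproper : H ≠ ⊤)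
    (hmal : Malnormal H) : JoinFree Γ H := by
  refine ⟨hinf, ?_⟩
  intro h hH hord g hjoin
  obtain ⟨J, ⟨V₁, V₂, hV₁, hV₂, hdisj, hunion, hadj⟩, hx⟩ := hjoin
  rw [← hunion] at hx
  obtain ⟨a, haV, b, hbV, hab⟩ := special_decomp hadj hx
  have hne : h ≠ 1 := fun e => hord (e ▸ IsOfFinOrder.one)
  -- Malnormality push: anything commuting with g y g⁻¹ (y ∈ H nontrivial) conjugates into H.
  have push : ∀ y ∈ H, y ≠ 1 → ∀ t : RACG Γ, Commute t (g * y * g⁻¹) →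
      g⁻¹ * t * g ∈ H := by
    intro y hy hyne t ht
    by_contra hk
    refine hyne (hmal _ hk y hy ?_)
    have e1 : (g⁻¹ * t * g)⁻¹ * y * (g⁻¹ * t * g) =
        g⁻¹ * (t⁻¹ * (g * y * g⁻¹) * t) * g := by group
    have e2 : t⁻¹ * (g * y * g⁻¹) * t = g * y * g⁻¹ := by
      rw [ht.inv_left.eq]; group
    have e3 : (g⁻¹ * t * g)⁻¹ * y * (g⁻¹ * t * g) = y := by
      rw [e1, e2]; group
    rw [e3]; exact hy
  -- A base vertex whose g-conjugated generator lies in H.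
  have hbase : ∃ s₀ : V, g⁻¹ * gen Γ s₀ * g ∈ H := by
    by_cases hb : b = 1
    · obtain ⟨w, hw⟩ := hV₂
      refine ⟨w, push h hH hne (gen Γ w) ?_⟩
      rw [hab, hb, mul_one]
      exact (special_commute hadj a haV (gen Γ w)
        (Subgroup.subset_closure ⟨w, hw, rfl⟩)).symm
    · have hcb : Commute b (g * h * g⁻¹) := by
        rw [hab]
        exact ((special_commute hadj a haV b hbV).symm.mul_right (Commute.refl b))
      have hbH : g⁻¹ * b * g ∈ H := push h hH hne b hcb
      have hbne : g⁻¹ * b * g ≠ 1 := by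
        intro e
        apply hb
        have : b = g * (g⁻¹ * b * g) * g⁻¹ := by group
        rw [this, e]; group
      obtain ⟨w, hw⟩ := hV₁
      refine ⟨w, ?_⟩
      have hcw : Commute (gen Γ w) (g * (g⁻¹ * b * g) * g⁻¹) := by
        have e : g * (g⁻¹ * b * g) * g⁻¹ = b := by group
        rw [e]
        exact special_commute hadj (gen Γ w) (Subgroup.subset_closure ⟨w, hw, rfl⟩) b hbV
      exact push (g⁻¹ * b * g) hbH hbne (gen Γ w) hcw
  -- Spread along edges of the connected graph.
  have step : ∀ u v : V, Γ.Adj u v → g⁻¹ * gen Γ u * g ∈ H → g⁻¹ * gen Γ v * g ∈ H := by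
    intro u v huv hu
    have hune : g⁻¹ * gen Γ u * g ≠ 1 := by
      intro e
      apply gen_ne_one (Γ := Γ) u
      have : gen Γ u = g * (g⁻¹ * gen Γ u * g) * g⁻¹ := by group
      rw [this, e]; group
    have hcw : Commute (gen Γ v) (g * (g⁻¹ * gen Γ u * g) * g⁻¹) := by
      have e : g * (g⁻¹ * gen Γ u * g) * g⁻¹ = gen Γ u := by group
      rw [e]
      exact (gen_comm huv).symm
    exact push (g⁻¹ * gen Γ u * g) hu hune (gen Γ v) hcw
  have walkP : ∀ (u v : V), Γ.Walk u v → g⁻¹ * gen Γ u * g ∈ H → g⁻¹ * gen Γ v * g ∈ H := by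
    intro u v p
    induction p with
    | nil => exact id
    | cons hadj' _ ih => exact fun hu => ih (step _ _ hadj' hu)
  obtain ⟨s₀, hs₀⟩ := hbase
  have hallv : ∀ v : V, g⁻¹ * gen Γ v * g ∈ H := by
    intro v
    obtain ⟨p⟩ := hconn.preconnected s₀ v
    exact walkP s₀ v p hs₀
  -- Conclude H = ⊤, contradicting properness.
  refine hproper (eq_top_iff.mpr ?_)
  intro z _
  have hz0 : g * z * g⁻¹ ∈ H.comap (MulAut.conj g⁻¹).toMonoidHom := by
    refine PresentedGroup.generated_by (racgRels Γ)
      (H.comap (MulAut.conj g⁻¹).toMonoidHom) ?_ (g * z * g⁻¹)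
    intro j
    refine Subgroup.mem_comap.mpr ?_
    show g⁻¹ * gen Γ j * (g⁻¹)⁻¹ ∈ H
    rw [inv_inv]
    exact hallv j
  rw [Subgroup.mem_comap] at hz0
  have hz : g⁻¹ * (g * z * g⁻¹) * g ∈ H := by
    have : (MulAut.conj g⁻¹).toMonoidHom (g * z * g⁻¹) = g⁻¹ * (g * z * g⁻¹) * g := by
      show g⁻¹ * (g * z * g⁻¹) * (g⁻¹)⁻¹ = _
      rw [inv_inv]
    rwa [this] at hz0
  have e : g⁻¹ * (g * z * g⁻¹) * g = z := by group
  rwa [e] at hz
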